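/- Lawvere's Fixed-Point Theorem: in a Cartesian closed category, if there exists a point-surjective morphism φ : X → Y^X (i.e., for every g : X → Y there is a point x : 1 → X with ev ∘ (φ∘x, id) representing g), then every endomorphism f : Y → Y has a fixed point, i.e., there exists y : 1 → Y with f ∘ y = y. -/

import Mathlib

open CategoryTheory MonoidalCategory CartesianClosed

/-- Lawvere's Fixed-Point Theorem: in a cartesian closed category, if `φ : X ⟶ Y^X` is
point-surjective (every `g : X ⟶ Y` is represented, via evaluation, by some point
`x : 1 ⟶ X`), then every endomorphism `f : Y ⟶ Y` has a fixed point `y : 1 ⟶ Y`. -/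
theorem lawvere_fixed_point {C : Type*} [Category C] [CartesianMonoidalCategory C]
    [MonoidalClosed C] {X Y : C} (φ : X ⟶ (X ⟹ Y))
    (hsurj : ∀ g : X ⟶ Y, ∃ x : 𝟙_ C ⟶ X,
      g = CartesianMonoidalCategory.lift (𝟙 X) (CartesianMonoidalCategory.toUnit X ≫ x ≫ φ) ≫
        (ihom.ev X).app Y)
    (f : Y ⟶ Y) : ∃ y : 𝟙_ C ⟶ Y, y ≫ f = y := by
  obtain ⟨x, hx⟩ := hsurj
    (CartesianMonoidalCategory.lift (𝟙 X) φ ≫ (ihom.ev X).app Y ≫ f)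
  refine ⟨x ≫ CartesianMonoidalCategory.lift (𝟙 X) φ ≫ (ihom.ev X).app Y, ?_⟩
  have key : x ≫ CartesianMonoidalCategory.lift (𝟙 X)
      (CartesianMonoidalCategory.toUnit X ≫ x ≫ φ) =
      x ≫ CartesianMonoidalCategory.lift (𝟙 X) φ := by
    apply CartesianMonoidalCategory.hom_ext <;>
      simp [CartesianMonoidalCategory.comp_lift,
        ← Category.assoc, CartesianMonoidalCategory.toUnit_unique
          (x ≫ CartesianMonoidalCategory.toUnit X) (𝟙 _)]
  calc (x ≫ CartesianMonoidalCategory.lift (𝟙 X) φ ≫ (ihom.ev X).app Y) ≫ f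
      = x ≫ CartesianMonoidalCategory.lift (𝟙 X) φ ≫ (ihom.ev X).app Y ≫ f := by
        simp only [Category.assoc]
    _ = x ≫ CartesianMonoidalCategory.lift (𝟙 X)
          (CartesianMonoidalCategory.toUnit X ≫ x ≫ φ) ≫ (ihom.ev X).app Y := by
        rw [hx]
    _ = x ≫ CartesianMonoidalCategory.lift (𝟙 X) φ ≫ (ihom.ev X).app Y := by
        rw [← Category.assoc, key, Category.assoc]
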